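/- For every integer k ≥ 1, one has (2^k)! = Π_{i=1}^{k} C(2^i, 2^{i−1})^{2^{k−i}}. -/
import Mathlib


/-- Vardi's product identity: `(2^k)! = Π_{i=1}^{k} C(2^i, 2^(i−1))^(2^(k−i))`. -/
theorem vardi_product_identity (k : ℕ) (hk : 1 ≤ k) :
    (2 ^ k).factorial =
      ∏ i ∈ Finset.Icc 1 k, ((2 ^ i).choose (2 ^ (i - 1))) ^ 2 ^ (k - i) := by
  induction k with
  | zero => omega
  | succ k ih =>
    rcases Nat.eq_or_lt_of_le hk with h | h
    · simp [← h]
    · have hk1 : 1 ≤ k := by omega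
      have key : (2 ^ (k + 1)).factorial =
          (2 ^ (k + 1)).choose (2 ^ k) * ((2 ^ k).factorial) ^ 2 := by
        have := Nat.choose_mul_factorial_mul_factorial
          (by rw [pow_succ]; omega : (2:ℕ) ^ k ≤ 2 ^ (k+1))
        have h2 : 2 ^ (k + 1) - 2 ^ k = 2 ^ k := by
          rw [pow_succ]; omega
        rw [h2] at this
        rw [← this]; ring
      rw [key, ih hk1]
      rw [Finset.prod_Icc_succ_top (by omega : 1 ≤ k + 1)]
      simp only [Nat.add_sub_cancel, Nat.sub_self, pow_zero, pow_one]
      rw [mul_comm, ← Finset.prod_pow]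
      congr 1
      refine Finset.prod_congr rfl fun i hi => ?_
      rw [← pow_mul]
      congr 1
      simp only [Finset.mem_Icc] at hi
      have : k + 1 - i = (k - i) + 1 := by omega
      rw [this, pow_succ]
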